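/- There exists a universal constant C > 0 with the following property. Let θ : ℝ → ℝ be bounded and Lipschitz continuous, let x ∈ ℝ, and let h ∈ ℝ with h ≠ 0. Writing δ_hθ(z) = θ(z+h) − θ(z) and D[δ_hθ](x) = ∫_{ℝ} (δ_hθ(x) − δ_hθ(x+y))² |y|^{−2} dy (a finite integral under these hypotheses), one has C · ‖θ‖_{L^∞(ℝ)} · |h| · D[δ_hθ](x) ≥ |δ_hθ(x)|³. -/

import Mathlib

open Real MeasureTheory

private lemma cs_aux {μ : Measure ℝ} [IsFiniteMeasure μ] {g : ℝ → ℝ}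
    (hg : Integrable g μ) (hg2 : Integrable (fun y => g y ^ 2) μ) :
    (∫ y, g y ∂μ) ^ 2 ≤ (μ Set.univ).toReal * ∫ y, g y ^ 2 ∂μ := by
  set m := (μ Set.univ).toReal with hm
  have hm0 : 0 ≤ m := ENNReal.toReal_nonneg
  set I := ∫ y, g y ∂μ with hI
  rcases eq_or_lt_of_le hm0 with h0 | hmpos
  · have hμ0 : μ = 0 := by
      have h1 : μ Set.univ = 0 := by
        rcases (ENNReal.toReal_eq_zero_iff _).1 h0.symm with h | h
        · exact h
        · exact absurd h (measure_ne_top μ _)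
      exact Measure.measure_univ_eq_zero.1 h1
    simp [hI, hμ0]
  · have key : 0 ≤ ∫ y, (m * g y - I) ^ 2 ∂μ :=
      integral_nonneg fun y => sq_nonneg _
    have expand : ∫ y, (m * g y - I) ^ 2 ∂μ
        = m ^ 2 * (∫ y, g y ^ 2 ∂μ) - 2 * m * I * I + I ^ 2 * m := by
      have h1 : (fun y => (m * g y - I) ^ 2)
          = fun y => m ^ 2 * g y ^ 2 - (2 * m * I) * g y + I ^ 2 := by
        funext y; ring
      have hi1 : Integrable (fun y => m ^ 2 * g y ^ 2) μ := hg2.const_mul _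
      have hi2 : Integrable (fun y => (2 * m * I) * g y) μ := hg.const_mul _
      have hi3 : Integrable (fun y => m ^ 2 * g y ^ 2 - 2 * m * I * g y) μ := hi1.sub hi2
      rw [h1, integral_add hi3 (integrable_const _),
        integral_sub hi1 hi2, integral_const_mul, integral_const_mul,
        integral_const]
      simp [smul_eq_mul, ← hI, ← hm]
      rw [measureReal_def, ← hm]
      ring
    rw [expand] at key
    nlinarith [key, hmpos, sq_nonneg I]

theorem nonlinear_lower_bound_1d :
    ∃ C : ℝ, 0 < C ∧
      ∀ θ : ℝ → ℝ,
      (∃ M : ℝ, ∀ z, |θ z| ≤ M) → (∃ K : NNReal, LipschitzWith K θ) →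
      ∀ x h : ℝ, h ≠ 0 →
        Integrable (fun y : ℝ =>
          ((θ (x + h) - θ x) - (θ (x + y + h) - θ (x + y))) ^ 2 / |y| ^ 2) ∧
        C * (⨆ z, |θ z|) * |h| *
            (∫ y : ℝ, ((θ (x + h) - θ x) - (θ (x + y + h) - θ (x + y))) ^ 2 / |y| ^ 2) ≥
          |θ (x + h) - θ x| ^ 3 := by
  refine ⟨64, by norm_num, ?_⟩
  rintro θ ⟨M, hM⟩ ⟨K, hK⟩ x h hh
  have hθc : Continuous θ := hK.continuous
  set S := ⨆ z, |θ z| with hS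
  have hbdd : BddAbove (Set.range fun z => |θ z|) := ⟨M, by rintro _ ⟨z, rfl⟩; exact hM z⟩
  have hSz : ∀ z, |θ z| ≤ S := fun z => le_ciSup hbdd z
  have hS0 : 0 ≤ S := le_trans (abs_nonneg _) (hSz 0)
  set a := θ (x + h) - θ x with ha
  set F : ℝ → ℝ := fun y => (a - (θ (x + y + h) - θ (x + y))) ^ 2 / |y| ^ 2 with hF
  have hh0 : 0 < |h| := abs_pos.2 hh
  -- pointwise bounds on the numerator
  have hnum_bdd : ∀ y, (a - (θ (x + y + h) - θ (x + y))) ^ 2 ≤ 16 * S ^ 2 := by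
    intro y
    have h1 := hSz (x + h); have h2 := hSz x; have h3 := hSz (x + y + h); have h4 := hSz (x + y)
    rw [abs_le] at h1 h2 h3 h4
    nlinarith [h1.1, h1.2, h2.1, h2.2, h3.1, h3.2, h4.1, h4.2]
  have hnum_lip : ∀ y, (a - (θ (x + y + h) - θ (x + y))) ^ 2 ≤ 4 * (K : ℝ) ^ 2 * y ^ 2 := by
    intro y
    have h1 : |θ (x + h) - θ (x + y + h)| ≤ (K : ℝ) * |y| := by
      have := hK.dist_le_mul (x + h) (x + y + h)
      rw [Real.dist_eq, Real.dist_eq] at this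
      calc |θ (x + h) - θ (x + y + h)| ≤ (K : ℝ) * |x + h - (x + y + h)| := this
        _ = (K : ℝ) * |y| := by rw [show x + h - (x + y + h) = -y by ring, abs_neg]
    have h2 : |θ x - θ (x + y)| ≤ (K : ℝ) * |y| := by
      have := hK.dist_le_mul x (x + y)
      rw [Real.dist_eq, Real.dist_eq] at this
      calc |θ x - θ (x + y)| ≤ (K : ℝ) * |x - (x + y)| := this
        _ = (K : ℝ) * |y| := by rw [show x - (x + y) = -y by ring, abs_neg]
    have h3 : |a - (θ (x + y + h) - θ (x + y))| ≤ 2 * (K : ℝ) * |y| := by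
      calc |a - (θ (x + y + h) - θ (x + y))|
          = |(θ (x + h) - θ (x + y + h)) + (θ (x + y) - θ x)| := by rw [ha]; congr 1; ring
        _ ≤ |θ (x + h) - θ (x + y + h)| + |θ (x + y) - θ x| := abs_add_le _ _
        _ ≤ (K : ℝ) * |y| + (K : ℝ) * |y| := by
            refine add_le_add h1 ?_
            rw [abs_sub_comm]; exact h2
        _ = 2 * (K : ℝ) * |y| := by ring
    calc (a - (θ (x + y + h) - θ (x + y))) ^ 2
        ≤ (2 * (K : ℝ) * |y|) ^ 2 := by
          rw [← sq_abs (a - (θ (x + y + h) - θ (x + y)))]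
          exact pow_le_pow_left₀ (abs_nonneg _) h3 2
      _ = 4 * (K : ℝ) ^ 2 * y ^ 2 := by
          rw [mul_pow, mul_pow, sq_abs]; ring
  have hFnn : ∀ y, 0 ≤ F y := fun y => div_nonneg (sq_nonneg _) (sq_nonneg _)
  have hFmeas : Measurable F := by
    apply Measurable.div
    · exact ((continuous_const.sub ((hθc.comp (by fun_prop)).sub
        (hθc.comp (by fun_prop)))).pow 2).measurable
    · exact ((continuous_abs.pow 2).measurable).comp measurable_id
  have hFle : ∀ y, F y ≤ (16 * S ^ 2 + 4 * (K : ℝ) ^ 2) * (1 + y ^ 2)⁻¹ := by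
    intro y
    rcases eq_or_ne y 0 with rfl | hy
    · simp [hF]
      positivity
    · have hy2 : (0:ℝ) < y ^ 2 := by positivity
      have h1y : (0:ℝ) < 1 + y ^ 2 := by positivity
      have key : (a - (θ (x + y + h) - θ (x + y))) ^ 2 / y ^ 2
          ≤ (16 * S ^ 2 + 4 * (K : ℝ) ^ 2) / (1 + y ^ 2) := by
        rw [div_le_div_iff₀ hy2 h1y]
        nlinarith [hnum_bdd y, hnum_lip y, hy2.le]
      calc F y = (a - (θ (x + y + h) - θ (x + y))) ^ 2 / y ^ 2 := by
            rw [hF]; simp [sq_abs]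
        _ ≤ (16 * S ^ 2 + 4 * (K : ℝ) ^ 2) / (1 + y ^ 2) := key
        _ = (16 * S ^ 2 + 4 * (K : ℝ) ^ 2) * (1 + y ^ 2)⁻¹ := by rw [div_eq_mul_inv]
  have hFint : Integrable F := by
    refine (((integrable_inv_one_add_sq).const_mul (16 * S ^ 2 + 4 * (K : ℝ) ^ 2)).mono'
      hFmeas.aestronglyMeasurable ?_)
    filter_upwards with y
    rw [Real.norm_eq_abs, abs_of_nonneg (hFnn y)]
    exact hFle y
  refine ⟨hFint, ?_⟩
  have hD0 : 0 ≤ ∫ y, F y := integral_nonneg hFnn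
  by_cases haz : a = 0
  · rw [ge_iff_le, haz]
    simp only [abs_zero]
    rw [zero_pow (by norm_num)]
    have : (0:ℝ) ≤ 64 * S * |h| := by positivity
    exact mul_nonneg this hD0
  · -- main case : a ≠ 0
    have haa : 0 < |a| := abs_pos.2 haz
    have h2S : |a| ≤ 2 * S := by
      calc |a| ≤ |θ (x + h)| + |θ x| := by rw [ha]; exact abs_sub _ _
        _ ≤ S + S := add_le_add (hSz _) (hSz _)
        _ = 2 * S := by ring
    have hSpos : 0 < S := by nlinarith
    set r := 4 * S * |h| / |a| with hr
    have hrpos : 0 < r := by positivity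
    have hrle : r ≤ 2 * r := by linarith
    have hcont : Continuous fun y => θ (x + y) :=
      hθc.comp (continuous_const.add continuous_id)
    have hconth : Continuous fun y => θ (x + y + h) :=
      hθc.comp ((continuous_const.add continuous_id).add continuous_const)
    have hgc : Continuous fun y => a - (θ (x + y + h) - θ (x + y)) :=
      continuous_const.sub (hconth.sub hcont)
    have hii : ∀ u v : ℝ, IntervalIntegrable (fun y => θ (x + y)) volume u v :=
      fun u v => hcont.intervalIntegrable u v
    have hiih : ∀ u v : ℝ, IntervalIntegrable (fun y => θ (x + y + h)) volume u v :=
      fun u v => hconth.intervalIntegrable u v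
    -- Step A : the shifted integral identity and bound
    have hA1 : (∫ y in r..(2*r), θ (x + y + h)) = ∫ y in (r+h)..(2*r+h), θ (x + y) := by
      have := intervalIntegral.integral_comp_add_right (a := r) (b := 2*r)
        (fun y => θ (x + y)) h
      simpa [add_assoc] using this
    have hA2 : (∫ y in (r+h)..(2*r+h), θ (x + y))
        = (∫ y in (r+h)..(2*r), θ (x + y)) + ∫ y in (2*r)..(2*r+h), θ (x + y) :=
      (intervalIntegral.integral_add_adjacent_intervals (hii _ _) (hii _ _)).symm
    have hA3 : (∫ y in r..(2*r), θ (x + y))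
        = (∫ y in r..(r+h), θ (x + y)) + ∫ y in (r+h)..(2*r), θ (x + y) :=
      (intervalIntegral.integral_add_adjacent_intervals (hii _ _) (hii _ _)).symm
    have hbound : ∀ c : ℝ, |∫ y in c..(c+h), θ (x + y)| ≤ S * |h| := by
      intro c
      have := intervalIntegral.norm_integral_le_of_norm_le_const (C := S) (a := c) (b := c + h)
        (f := fun y => θ (x + y)) (fun y _ => by rw [Real.norm_eq_abs]; exact hSz _)
      simpa [add_sub_cancel_left] using this
    have hI1 : |∫ y in r..(2*r), (θ (x + y + h) - θ (x + y))| ≤ 2 * (S * |h|) := by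
      rw [intervalIntegral.integral_sub (hiih _ _) (hii _ _), hA1, hA2, hA3]
      have e : (∫ y in (r+h)..(2*r), θ (x + y)) + (∫ y in (2*r)..(2*r+h), θ (x + y))
          - ((∫ y in r..(r+h), θ (x + y)) + ∫ y in (r+h)..(2*r), θ (x + y))
          = (∫ y in (2*r)..(2*r+h), θ (x + y)) - ∫ y in r..(r+h), θ (x + y) := by ring
      rw [e]
      calc |(∫ y in (2*r)..(2*r+h), θ (x + y)) - ∫ y in r..(r+h), θ (x + y)|
          ≤ |∫ y in (2*r)..(2*r+h), θ (x + y)| + |∫ y in r..(r+h), θ (x + y)| := abs_sub _ _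
        _ ≤ S * |h| + S * |h| := add_le_add (hbound _) (hbound _)
        _ = 2 * (S * |h|) := by ring
    -- Step B : lower bound on the averaged difference
    have hI2eq : (∫ y in r..(2*r), (a - (θ (x + y + h) - θ (x + y))))
        = r * a - ∫ y in r..(2*r), (θ (x + y + h) - θ (x + y)) := by
      rw [intervalIntegral.integral_sub intervalIntegrable_const ((hiih _ _).sub (hii _ _)),
        intervalIntegral.integral_const, smul_eq_mul]
      congr 1; ring
    have hra : r * |a| = 4 * S * |h| := by rw [hr]; field_simp
    have hI2 : 2 * (S * |h|) ≤ |∫ y in r..(2*r), (a - (θ (x + y + h) - θ (x + y)))| := by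
      rw [hI2eq]
      have h1 : |r * a| - |∫ y in r..(2*r), (θ (x + y + h) - θ (x + y))|
          ≤ |r * a - ∫ y in r..(2*r), (θ (x + y + h) - θ (x + y))| :=
        abs_sub_abs_le_abs_sub _ _
      have h2 : |r * a| = r * |a| := by rw [abs_mul, abs_of_pos hrpos]
      rw [h2, hra] at h1
      linarith [hI1]
    -- Step C : Cauchy–Schwarz on the interval
    set μ := volume.restrict (Set.Ioc r (2*r)) with hμ
    haveI : IsFiniteMeasure μ := by
      constructor
      rw [hμ, Measure.restrict_apply_univ]
      exact measure_Ioc_lt_top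
    have hμuniv : (μ Set.univ).toReal = r := by
      rw [hμ, Measure.restrict_apply_univ, Real.volume_Ioc, ENNReal.toReal_ofReal (by linarith)]
      ring
    have hgint : Integrable (fun y => a - (θ (x + y + h) - θ (x + y))) μ :=
      (hgc.intervalIntegrable r (2*r)).1
    have hg2int : Integrable (fun y => (a - (θ (x + y + h) - θ (x + y))) ^ 2) μ :=
      ((hgc.pow 2).intervalIntegrable r (2*r)).1
    have hCS := cs_aux hgint hg2int
    rw [hμuniv] at hCS
    have hIeq : (∫ y, (a - (θ (x + y + h) - θ (x + y))) ∂μ)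
        = ∫ y in r..(2*r), (a - (θ (x + y + h) - θ (x + y))) :=
      (intervalIntegral.integral_of_le hrle).symm
    rw [hIeq] at hCS
    -- Step D : compare g² with F on the interval
    have hD1 : (∫ y, (a - (θ (x + y + h) - θ (x + y))) ^ 2 ∂μ)
        ≤ ∫ y, (4 * r ^ 2) * F y ∂μ := by
      refine setIntegral_mono_on hg2int (hFint.integrableOn.const_mul _) measurableSet_Ioc ?_
      intro y hy
      have hy0 : 0 < y := lt_trans hrpos hy.1
      have hy2r : y ≤ 2 * r := hy.2
      have hyne : y ^ 2 ≠ 0 := by positivity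
      have hFy : F y = (a - (θ (x + y + h) - θ (x + y))) ^ 2 / y ^ 2 := by
        rw [hF]; simp [sq_abs]
      have : (a - (θ (x + y + h) - θ (x + y))) ^ 2 = F y * y ^ 2 := by
        rw [hFy, div_mul_cancel₀ _ hyne]
      rw [this]
      have hy4r : y ^ 2 ≤ 4 * r ^ 2 := by nlinarith
      calc F y * y ^ 2 ≤ F y * (4 * r ^ 2) := by
            exact mul_le_mul_of_nonneg_left hy4r (hFnn y)
        _ = (4 * r ^ 2) * F y := by ring
    have hD2 : (∫ y, (4 * r ^ 2) * F y ∂μ) ≤ (4 * r ^ 2) * ∫ y, F y := by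
      rw [integral_const_mul]
      exact mul_le_mul_of_nonneg_left
        (setIntegral_le_integral hFint (Filter.Eventually.of_forall hFnn)) (by positivity)
    -- Combine everything
    set D := ∫ y, F y with hD
    have hkey : (2 * (S * |h|)) ^ 2 ≤ r * (4 * r ^ 2 * D) := by
      calc (2 * (S * |h|)) ^ 2
          ≤ (∫ y in r..(2*r), (a - (θ (x + y + h) - θ (x + y)))) ^ 2 := by
            have h0 : (0:ℝ) ≤ 2 * (S * |h|) := by positivity
            calc (2 * (S * |h|)) ^ 2
                ≤ |∫ y in r..(2*r), (a - (θ (x + y + h) - θ (x + y)))| ^ 2 :=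
                  pow_le_pow_left₀ h0 hI2 2
              _ = (∫ y in r..(2*r), (a - (θ (x + y + h) - θ (x + y)))) ^ 2 := sq_abs _
        _ ≤ r * ∫ y, (a - (θ (x + y + h) - θ (x + y))) ^ 2 ∂μ := hCS
        _ ≤ r * (4 * r ^ 2 * D) := by
            refine mul_le_mul_of_nonneg_left (le_trans hD1 hD2) hrpos.le
    have hr3 : r ^ 3 * |a| ^ 3 = 64 * (S * |h|) ^ 3 := by
      calc r ^ 3 * |a| ^ 3 = (r * |a|) ^ 3 := by ring
        _ = (4 * S * |h|) ^ 3 := by rw [hra]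
        _ = 64 * (S * |h|) ^ 3 := by ring
    rw [ge_iff_le]
    have hmul : 4 * (S * |h|) ^ 2 * |a| ^ 3 ≤ 4 * r ^ 3 * D * |a| ^ 3 := by
      have h5 := mul_le_mul_of_nonneg_right hkey (pow_nonneg haa.le 3)
      calc 4 * (S * |h|) ^ 2 * |a| ^ 3 = (2 * (S * |h|)) ^ 2 * |a| ^ 3 := by ring
        _ ≤ r * (4 * r ^ 2 * D) * |a| ^ 3 := h5
        _ = 4 * r ^ 3 * D * |a| ^ 3 := by ring
    have hre : 4 * r ^ 3 * D * |a| ^ 3 = 256 * (S * |h|) ^ 3 * D := by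
      calc 4 * r ^ 3 * D * |a| ^ 3 = 4 * (r ^ 3 * |a| ^ 3) * D := by ring
        _ = 4 * (64 * (S * |h|) ^ 3) * D := by rw [hr3]
        _ = 256 * (S * |h|) ^ 3 * D := by ring
    rw [hre] at hmul
    have h6 : (0:ℝ) < 4 * (S * |h|) ^ 2 := by positivity
    have h7 : 4 * (S * |h|) ^ 2 * |a| ^ 3 ≤ 4 * (S * |h|) ^ 2 * (64 * S * |h| * D) := by
      calc 4 * (S * |h|) ^ 2 * |a| ^ 3 ≤ 256 * (S * |h|) ^ 3 * D := hmul
        _ = 4 * (S * |h|) ^ 2 * (64 * S * |h| * D) := by ring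
    exact le_of_mul_le_mul_left h7 h6
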